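/- Let N be a closed subspace of a complex Hilbert space E and let (M_i)_{i ∈ I} be a family of closed subspaces of E such that P_{M_i} commutes with P_N for every i ∈ I. Then N ⊓ (topological closure of ⨆_{i} M_i) = topological closure of ⨆_{i} (N ⊓ M_i). -/

import Mathlib

variable {E : Type*} [NormedAddCommGroup E] [InnerProductSpace ℂ E] [CompleteSpace E]

/-- Orthogonal projection onto (the topological closure of) a submodule, as a
continuous linear operator on `E`. For a closed subspace `K` this is the
orthogonal projection `P_K` onto `K` itself. -/
noncomputable def proj (K : Submodule ℂ E) : E →L[ℂ] E :=
  K.topologicalClosure.subtypeL.comp (Submodule.orthogonalProjectionOnto K.topologicalClosure)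

theorem proj_mem (K : Submodule ℂ E) (x : E) : proj K x ∈ K.topologicalClosure := by
  simp [proj]

theorem proj_eq_self (K : Submodule ℂ E) {x : E} (hx : x ∈ K.topologicalClosure) :
    proj K x = x := by
  show ((Submodule.orthogonalProjectionOnto K.topologicalClosure x : E)) = x
  exact congrArg Subtype.val (K.topologicalClosure.orthogonalProjectionOnto_mem_subspace_eq_self ⟨x, hx⟩)

theorem stmt12 {ι : Type*} (N : Submodule ℂ E) (M : ι → Submodule ℂ E)
    (hN : IsClosed (N : Set E)) (hM : ∀ i, IsClosed ((M i : Set E)))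
    (hcomm : ∀ i, proj (M i) ∘L proj N = proj N ∘L proj (M i)) :
    N ⊓ (⨆ i, M i).topologicalClosure = (⨆ i, N ⊓ M i).topologicalClosure := by
  have hNc : N.topologicalClosure = N := hN.submodule_topologicalClosure_eq
  have hMc : ∀ i, (M i).topologicalClosure = M i := fun i =>
    (hM i).submodule_topologicalClosure_eq
  -- `proj N` maps each `M i` into `N ⊓ M i`
  have key : ∀ i, ∀ x ∈ M i, proj N x ∈ N ⊓ M i := by
    intro i x hx
    refine ⟨by simpa [hNc] using proj_mem N x, ?_⟩
    have hx' : proj (M i) x = x := proj_eq_self (M i) (by rwa [hMc i])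
    have : proj N x = proj (M i) (proj N x) := by
      conv_lhs => rw [← hx']
      have := congrArg (fun f => f x) (hcomm i)
      simpa using this.symm
    rw [this]
    simpa [hMc i] using proj_mem (M i) (proj N x)
  -- hence it maps the supremum into the supremum of intersections
  have hmap : ∀ x ∈ (⨆ i, M i), proj N x ∈ ⨆ i, N ⊓ M i := by
    intro x hx
    have : Submodule.map (proj N : E →ₗ[ℂ] E) (⨆ i, M i) ≤ ⨆ i, N ⊓ M i := by
      rw [Submodule.map_iSup]
      exact iSup_mono fun i => Submodule.map_le_iff_le_comap.mpr fun y hy => key i y hy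
    exact this ⟨x, hx, rfl⟩
  apply le_antisymm
  · rintro x ⟨hxN, hxU⟩
    have hx' : proj N x = x := proj_eq_self N (by rwa [hNc])
    have : proj N x ∈ closure ((⨆ i, N ⊓ M i : Submodule ℂ E) : Set E) :=
      map_mem_closure (proj N).continuous hxU fun y hy => hmap y hy
    rwa [hx'] at this
  · refine Submodule.topologicalClosure_minimal _ (iSup_le fun i => ?_)
      (hN.inter (⨆ i, M i).isClosed_topologicalClosure)
    exact inf_le_inf le_rfl ((le_iSup M i).trans (⨆ i, M i).le_topologicalClosure)
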